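/- For every positive integer p, Σ_{k=1}^{p} (2k-1)·cot((2k-1)π/(2p)) = J_{2p} - 2·J_p = -p·I_p. -/

import Mathlib

open Real Finset

/-- The sum of cosecants `I_p = ∑_{k=1}^{p-1} csc(kπ/p)`. -/
noncomputable def Ip (p : ℕ) : ℝ := ∑ k ∈ Finset.Icc 1 (p - 1), 1 / Real.sin (k * π / p)

/-- The sum of cotangents `J_p = ∑_{k=1}^{p-1} k·cot(kπ/p)`. -/
noncomputable def Jp (p : ℕ) : ℝ := ∑ k ∈ Finset.Icc 1 (p - 1), (k : ℝ) * Real.cot (k * π / p)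

private lemma csc_double' (x : ℝ) (hs : Real.sin x ≠ 0) (hs2 : Real.sin (2*x) ≠ 0) :
    Real.cot x - Real.cot (2*x) = 1 / Real.sin (2*x) := by
  rw [Real.cot_eq_cos_div_sin, Real.cot_eq_cos_div_sin]
  field_simp
  rw [Real.sin_two_mul, Real.cos_two_mul']
  try left
  linear_combination Real.sin x * Real.sin_sq_add_cos_sq x

private lemma cot_double' (x : ℝ) (hs : Real.sin x ≠ 0) (hc : Real.cos x ≠ 0) :
    Real.cot x - Real.tan x = 2 * Real.cot (2*x) := by
  have hs2 : Real.sin (2*x) ≠ 0 := by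
    rw [Real.sin_two_mul]; exact mul_ne_zero (mul_ne_zero two_ne_zero hs) hc
  rw [Real.cot_eq_cos_div_sin, Real.cot_eq_cos_div_sin, Real.tan_eq_sin_div_cos]
  field_simp
  rw [Real.sin_two_mul, Real.cos_two_mul']
  try left
  ring

private lemma cot_pi_sub' (x : ℝ) : Real.cot (π - x) = - Real.cot x := by
  rw [Real.cot_eq_cos_div_sin, Real.cot_eq_cos_div_sin, Real.cos_pi_sub, Real.sin_pi_sub]
  ring

private lemma tan_pi_div_two_sub' (x : ℝ) : Real.tan (π/2 - x) = Real.cot x := by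
  rw [Real.cot_eq_cos_div_sin, Real.tan_eq_sin_div_cos, Real.cos_pi_div_two_sub,
    Real.sin_pi_div_two_sub]

private lemma cot_pi_div_two' : Real.cot (π/2) = 0 := by
  rw [Real.cot_eq_cos_div_sin, Real.cos_pi_div_two, zero_div]

private lemma sum_Icc_reflect (n : ℕ) (f : ℕ → ℝ) :
    ∑ k ∈ Icc 1 (n-1), f k = ∑ k ∈ Icc 1 (n-1), f (n - k) := by
  refine Finset.sum_nbij' (fun k => n - k) (fun k => n - k) ?_ ?_ ?_ ?_ ?_ <;>
    simp only [Finset.mem_Icc] <;> intro a ha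
  · omega
  · omega
  · omega
  · omega
  · congr 1; omega

private lemma sum_range_even_odd (n : ℕ) (f : ℕ → ℝ) :
    ∑ k ∈ range (2*n), f k = ∑ i ∈ range n, f (2*i) + ∑ i ∈ range n, f (2*i+1) := by
  induction n with
  | zero => simp
  | succ m ih =>
    rw [show 2*(m+1) = 2*m+1+1 from by omega, Finset.sum_range_succ, Finset.sum_range_succ,
      Finset.sum_range_succ (fun i => f (2*i)), Finset.sum_range_succ (fun i => f (2*i+1)), ih]
    ring

private lemma sum_Icc_to_range (n : ℕ) (f : ℕ → ℝ) :
    ∑ k ∈ Icc 1 n, f k = ∑ i ∈ range n, f (i+1) := by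
  rw [← Finset.Ico_add_one_right_eq_Icc, Finset.sum_Ico_eq_sum_range]
  simp only [Nat.add_sub_cancel]
  exact Finset.sum_congr rfl (fun i _ => by rw [Nat.add_comm])

private lemma sum_Icc_split (n : ℕ) (hn : 0 < n) (f : ℕ → ℝ) (h0 : f 0 = 0) :
    ∑ k ∈ Icc 1 (2*n-1), f k
      = ∑ k ∈ Icc 1 n, f (2*k-1) + ∑ k ∈ Icc 1 (n-1), f (2*k) := by
  have e1 : ∑ k ∈ Icc 1 (2*n-1), f k = ∑ k ∈ range (2*n), f k := by
    rw [sum_Icc_to_range]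
    conv_rhs => rw [show 2*n = (2*n-1)+1 from by omega, Finset.sum_range_succ' f (2*n-1)]
    rw [h0, add_zero]
  have e2 : ∑ k ∈ Icc 1 n, f (2*k-1) = ∑ i ∈ range n, f (2*i+1) := by
    rw [sum_Icc_to_range n (fun k => f (2*k-1))]
    refine Finset.sum_congr rfl (fun i _ => ?_)
    have h : 2*(i+1)-1 = 2*i+1 := by omega
    simp only [h]
  have e3 : ∑ k ∈ Icc 1 (n-1), f (2*k) = ∑ i ∈ range n, f (2*i) := by
    rw [sum_Icc_to_range (n-1) (fun k => f (2*k))]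
    conv_rhs => rw [show n = (n-1)+1 from by omega,
      Finset.sum_range_succ' (fun i => f (2*i)) (n-1)]
    simp only [Nat.mul_zero, h0, add_zero]
  rw [e1, e2, e3, sum_range_even_odd, add_comm]

theorem Mp_eq (p : ℕ) (hp : 0 < p) :
    (∑ k ∈ Finset.Icc 1 p, (2 * (k : ℝ) - 1) * Real.cot ((2 * (k : ℝ) - 1) * π / (2 * p))
      = Jp (2 * p) - 2 * Jp p) ∧
    Jp (2 * p) - 2 * Jp p = -(p : ℝ) * Ip p := by
  have hP : (0:ℝ) < (p:ℝ) := by exact_mod_cast hp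
  have hPne : (p:ℝ) ≠ 0 := ne_of_gt hP
  -- the function summed in `Jp (2*p)`
  set g : ℕ → ℝ := fun k => (k:ℝ) * Real.cot ((k:ℝ) * π / (2 * (p:ℝ))) with hg
  have hg0 : g 0 = 0 := by simp [hg]
  have hJ2p : Jp (2*p) = ∑ k ∈ Icc 1 (2*p-1), g k := by
    unfold Jp
    refine Finset.sum_congr rfl (fun k _ => ?_)
    simp only [hg]
    norm_num
  -- Part 1 : splitting into odd and even indices
  have hsplit := sum_Icc_split p hp g hg0
  have hodd : ∑ k ∈ Icc 1 p, g (2*k-1)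
      = ∑ k ∈ Finset.Icc 1 p, (2 * (k : ℝ) - 1) * Real.cot ((2 * (k : ℝ) - 1) * π / (2 * p)) := by
    refine Finset.sum_congr rfl (fun k hk => ?_)
    have hk1 : 1 ≤ k := (Finset.mem_Icc.mp hk).1
    have hc : ((2*k-1 : ℕ) : ℝ) = 2*(k:ℝ) - 1 := by
      have : (2*k-1 : ℕ) + 1 = 2*k := by omega
      have h2 : ((2*k-1 : ℕ) : ℝ) + 1 = 2*(k:ℝ) := by exact_mod_cast congrArg (Nat.cast (R := ℝ)) this
      linarith
    simp only [hg, hc]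
  have heven : ∑ k ∈ Icc 1 (p-1), g (2*k) = 2 * Jp p := by
    unfold Jp
    rw [Finset.mul_sum]
    refine Finset.sum_congr rfl (fun k hk => ?_)
    simp only [hg]
    have hang : ((2*k : ℕ):ℝ) * π / (2 * (p:ℝ)) = (k:ℝ) * π / (p:ℝ) := by
      push_cast
      field_simp
    rw [hang]
    push_cast
    ring
  have part1 : ∑ k ∈ Finset.Icc 1 p, (2 * (k : ℝ) - 1) * Real.cot ((2 * (k : ℝ) - 1) * π / (2 * p))
      = Jp (2 * p) - 2 * Jp p := by
    rw [hJ2p, hsplit, hodd, heven]; ring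
  refine ⟨part1, ?_⟩
  -- Part 2
  -- basic positivity facts on the half-angles
  have hA : ∀ k ∈ Icc 1 (p-1), Real.sin ((k:ℝ) * π / (2 * (p:ℝ))) ≠ 0 ∧
      Real.cos ((k:ℝ) * π / (2 * (p:ℝ))) ≠ 0 ∧ Real.sin ((k:ℝ) * π / (p:ℝ)) ≠ 0 := by
    intro k hk
    obtain ⟨hk1, hk2⟩ := Finset.mem_Icc.mp hk
    have hkp : (k:ℝ) < (p:ℝ) := by exact_mod_cast (by omega : k < p)
    have hk1' : (1:ℝ) ≤ (k:ℝ) := by exact_mod_cast hk1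
    have hA0 : 0 < (k:ℝ) * π / (2 * (p:ℝ)) := by positivity
    have hA1 : (k:ℝ) * π / (2 * (p:ℝ)) < π / 2 := by
      rw [div_lt_div_iff₀ (by positivity) (by norm_num)]
      nlinarith [Real.pi_pos]
    have hB0 : 0 < (k:ℝ) * π / (p:ℝ) := by positivity
    have hB1 : (k:ℝ) * π / (p:ℝ) < π := by
      rw [div_lt_iff₀ (by positivity)]
      nlinarith [Real.pi_pos]
    refine ⟨ne_of_gt (Real.sin_pos_of_pos_of_lt_pi hA0 (by linarith [Real.pi_pos])),
      ne_of_gt (Real.cos_pos_of_mem_Ioo ⟨by linarith [Real.pi_pos], hA1⟩),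
      ne_of_gt (Real.sin_pos_of_pos_of_lt_pi hB0 hB1)⟩
  -- h1 : J_{2p} as a sum over Icc 1 (p-1)
  have hmid : g p = 0 := by
    simp only [hg]
    have : (p:ℝ) * π / (2 * (p:ℝ)) = π / 2 := by field_simp
    rw [this, cot_pi_div_two', mul_zero]
  have hrefl : ∀ k ∈ Icc 1 (p-1), g (2*p - k)
      = -((2*(p:ℝ) - (k:ℝ)) * Real.cot ((k:ℝ) * π / (2 * (p:ℝ)))) := by
    intro k hk
    obtain ⟨hk1, hk2⟩ := Finset.mem_Icc.mp hk
    have hc : ((2*p - k : ℕ) : ℝ) = 2*(p:ℝ) - (k:ℝ) := by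
      have : (2*p - k : ℕ) + k = 2*p := by omega
      have h2 : ((2*p-k : ℕ) : ℝ) + (k:ℝ) = 2*(p:ℝ) := by exact_mod_cast congrArg (Nat.cast (R := ℝ)) this
      linarith
    have hang : (2*(p:ℝ) - (k:ℝ)) * π / (2 * (p:ℝ)) = π - (k:ℝ) * π / (2 * (p:ℝ)) := by
      field_simp
    simp only [hg, hc, hang, cot_pi_sub']
    ring
  have h1 : Jp (2*p) = ∑ k ∈ Icc 1 (p-1), (2*(k:ℝ) - 2*(p:ℝ)) * Real.cot ((k:ℝ) * π / (2 * (p:ℝ))) := by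
    rw [hJ2p]
    have hIcc : Icc 1 (2*p-1) = Ioc 0 (2*p-1) := Finset.Icc_add_one_left_eq_Ioc 0 (2*p-1)
    rw [hIcc, ← Finset.sum_Ioc_consecutive g (by omega : 0 ≤ p) (by omega : p ≤ 2*p-1)]
    have hIoc0p : ∑ k ∈ Ioc 0 p, g k = ∑ k ∈ Ioc 0 (p-1), g k := by
      rw [show p = (p-1)+1 from by omega, Finset.sum_Ioc_succ_top (by omega : 0 ≤ p-1)]
      rw [show (p-1)+1 = p from by omega, hmid, add_zero]
    have htail : ∑ k ∈ Ioc p (2*p-1), g k = ∑ k ∈ Icc 1 (p-1), g (2*p - k) := by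
      refine (Finset.sum_nbij' (fun k => 2*p - k) (fun k => 2*p - k) ?_ ?_ ?_ ?_ ?_).symm <;>
        simp only [Finset.mem_Icc, Finset.mem_Ioc] <;> intro a ha
      · omega
      · omega
      · omega
      · omega
      · trivial
    rw [hIoc0p, htail, ← Finset.Icc_add_one_left_eq_Ioc, zero_add, Finset.sum_congr rfl hrefl]
    rw [show Icc (Nat.succ 0) (p-1) = Icc 1 (p-1) from rfl, ← Finset.sum_add_distrib]
    refine Finset.sum_congr rfl (fun k hk => ?_)
    ring
  -- h2 : 2 J_p as a sum over Icc 1 (p-1)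
  have hJp : Jp p = ∑ k ∈ Icc 1 (p-1), (k:ℝ) * Real.cot ((k:ℝ) * π / (p:ℝ)) := rfl
  have hreflB : ∀ k ∈ Icc 1 (p-1), ((p - k : ℕ):ℝ) * Real.cot (((p-k : ℕ):ℝ) * π / (p:ℝ))
      = -(((p:ℝ) - (k:ℝ)) * Real.cot ((k:ℝ) * π / (p:ℝ))) := by
    intro k hk
    obtain ⟨hk1, hk2⟩ := Finset.mem_Icc.mp hk
    have hc : ((p - k : ℕ) : ℝ) = (p:ℝ) - (k:ℝ) := by
      have : (p - k : ℕ) + k = p := by omega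
      have h2 : ((p-k : ℕ) : ℝ) + (k:ℝ) = (p:ℝ) := by exact_mod_cast congrArg (Nat.cast (R := ℝ)) this
      linarith
    have hang : ((p:ℝ) - (k:ℝ)) * π / (p:ℝ) = π - (k:ℝ) * π / (p:ℝ) := by
      field_simp
    rw [hc, hang, cot_pi_sub']
    ring
  have h2 : 2 * Jp p = ∑ k ∈ Icc 1 (p-1), (2*(k:ℝ) - (p:ℝ)) * Real.cot ((k:ℝ) * π / (p:ℝ)) := by
    have hrev : Jp p = ∑ k ∈ Icc 1 (p-1), -(((p:ℝ) - (k:ℝ)) * Real.cot ((k:ℝ) * π / (p:ℝ))) := by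
      rw [hJp, sum_Icc_reflect p (fun k => (k:ℝ) * Real.cot ((k:ℝ) * π / (p:ℝ)))]
      exact Finset.sum_congr rfl hreflB
    nth_rewrite 1 [two_mul]
    nth_rewrite 2 [hrev]
    rw [hJp, ← Finset.sum_add_distrib]
    exact Finset.sum_congr rfl (fun k hk => by ring)
  -- h3 : passing from full angles to half angles in the cotangent sum
  have hang2 : ∀ k : ℕ, (k:ℝ) * π / (p:ℝ) = 2 * ((k:ℝ) * π / (2 * (p:ℝ))) := by
    intro k; field_simp
  have hT : ∑ k ∈ Icc 1 (p-1), (2*(k:ℝ) - (p:ℝ)) * Real.tan ((k:ℝ) * π / (2 * (p:ℝ)))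
      = - ∑ k ∈ Icc 1 (p-1), (2*(k:ℝ) - (p:ℝ)) * Real.cot ((k:ℝ) * π / (2 * (p:ℝ))) := by
    rw [sum_Icc_reflect p (fun k => (2*(k:ℝ) - (p:ℝ)) * Real.tan ((k:ℝ) * π / (2 * (p:ℝ)))),
      ← Finset.sum_neg_distrib]
    refine Finset.sum_congr rfl (fun k hk => ?_)
    obtain ⟨hk1, hk2⟩ := Finset.mem_Icc.mp hk
    have hc : ((p - k : ℕ) : ℝ) = (p:ℝ) - (k:ℝ) := by
      have : (p - k : ℕ) + k = p := by omega
      have h2 : ((p-k : ℕ) : ℝ) + (k:ℝ) = (p:ℝ) := by exact_mod_cast congrArg (Nat.cast (R := ℝ)) this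
      linarith
    have hang : ((p:ℝ) - (k:ℝ)) * π / (2 * (p:ℝ)) = π/2 - (k:ℝ) * π / (2 * (p:ℝ)) := by
      field_simp
    simp only [hc, hang, tan_pi_div_two_sub']
    ring
  have h3 : ∑ k ∈ Icc 1 (p-1), (2*(k:ℝ) - (p:ℝ)) * Real.cot ((k:ℝ) * π / (p:ℝ))
      = ∑ k ∈ Icc 1 (p-1), (2*(k:ℝ) - (p:ℝ)) * Real.cot ((k:ℝ) * π / (2 * (p:ℝ))) := by
    have step : ∑ k ∈ Icc 1 (p-1), (2*(k:ℝ) - (p:ℝ)) * Real.cot ((k:ℝ) * π / (p:ℝ))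
        = ∑ k ∈ Icc 1 (p-1), ((2*(k:ℝ) - (p:ℝ)) * Real.cot ((k:ℝ) * π / (2 * (p:ℝ))) / 2
            - (2*(k:ℝ) - (p:ℝ)) * Real.tan ((k:ℝ) * π / (2 * (p:ℝ))) / 2) := by
      refine Finset.sum_congr rfl (fun k hk => ?_)
      obtain ⟨hs, hc, _⟩ := hA k hk
      have hd := cot_double' ((k:ℝ) * π / (2 * (p:ℝ))) hs hc
      rw [hang2 k]
      linear_combination (-(2*(k:ℝ) - (p:ℝ))/2) * hd
    rw [step, Finset.sum_sub_distrib, ← Finset.sum_div, ← Finset.sum_div, hT]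
    ring
  -- h4 : the cosecant sum
  have h4 : Ip p = ∑ k ∈ Icc 1 (p-1), (Real.cot ((k:ℝ) * π / (2 * (p:ℝ)))
      - Real.cot ((k:ℝ) * π / (p:ℝ))) := by
    unfold Ip
    refine Finset.sum_congr rfl (fun k hk => ?_)
    obtain ⟨hs, _, hsB⟩ := hA k hk
    have hsB' : Real.sin (2 * ((k:ℝ) * π / (2 * (p:ℝ)))) ≠ 0 := by rw [← hang2 k]; exact hsB
    have := csc_double' ((k:ℝ) * π / (2 * (p:ℝ))) hs hsB'
    rw [← hang2 k] at this
    rw [this]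
  -- h5 : the plain cotangent sum over full angles vanishes
  have h5 : ∑ k ∈ Icc 1 (p-1), Real.cot ((k:ℝ) * π / (p:ℝ)) = 0 := by
    have e1 : ∑ k ∈ Icc 1 (p-1), Real.cot ((k:ℝ) * π / (p:ℝ))
        = ∑ k ∈ Icc 1 (p-1), Real.cot (((p - k : ℕ):ℝ) * π / (p:ℝ)) :=
      sum_Icc_reflect p (fun k => Real.cot ((k:ℝ) * π / (p:ℝ)))
    have e2 : ∑ k ∈ Icc 1 (p-1), Real.cot (((p - k : ℕ):ℝ) * π / (p:ℝ))
        = ∑ k ∈ Icc 1 (p-1), -Real.cot ((k:ℝ) * π / (p:ℝ)) := by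
      refine Finset.sum_congr rfl (fun k hk => ?_)
      obtain ⟨hk1, hk2⟩ := Finset.mem_Icc.mp hk
      have hc : ((p - k : ℕ) : ℝ) = (p:ℝ) - (k:ℝ) := by
        have : (p - k : ℕ) + k = p := by omega
        have h2 : ((p-k : ℕ) : ℝ) + (k:ℝ) = (p:ℝ) := by exact_mod_cast congrArg (Nat.cast (R := ℝ)) this
        linarith
      have hang : ((p:ℝ) - (k:ℝ)) * π / (p:ℝ) = π - (k:ℝ) * π / (p:ℝ) := by
        field_simp
      rw [hc, hang, cot_pi_sub']
    rw [e2, Finset.sum_neg_distrib] at e1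
    linarith
  -- put everything together
  have hfinal : ∑ k ∈ Icc 1 (p-1), (2*(k:ℝ) - 2*(p:ℝ)) * Real.cot ((k:ℝ) * π / (2 * (p:ℝ)))
      - ∑ k ∈ Icc 1 (p-1), (2*(k:ℝ) - (p:ℝ)) * Real.cot ((k:ℝ) * π / (2 * (p:ℝ)))
      = -(p:ℝ) * ∑ k ∈ Icc 1 (p-1), Real.cot ((k:ℝ) * π / (2 * (p:ℝ))) := by
    rw [← Finset.sum_sub_distrib, Finset.mul_sum]
    exact Finset.sum_congr rfl (fun k hk => by ring)
  rw [h1, h2, h3, hfinal, h4]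
  rw [Finset.sum_sub_distrib, mul_sub]
  rw [show -(p:ℝ) * ∑ k ∈ Icc 1 (p-1), Real.cot ((k:ℝ) * π / (p:ℝ)) = 0 from by rw [h5]; ring]
  ring
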